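/- Let c ∈ (−1,1) and let T ∈ B(H,K) be a nonzero bounded linear map between real Hilbert spaces. Then there exists ε ∈ [0, 1+|c|) such that T is (ε,c)-angle preserving if and only if T is bounded below (i.e., [T] > 0). -/

import Mathlib

set_option maxHeartbeats 1600000


open scoped RealInnerProductSpace

lemma inner_combo' {E : Type*} [NormedAddCommGroup E] [InnerProductSpace ℝ E]
    (u v : E) (A B C D : ℝ) :
    ⟪A•u + B•v, C•u + D•v⟫ = A*C*‖u‖^2 + (A*D + B*C)*⟪u,v⟫ + B*D*‖v‖^2 := by
  simp only [inner_add_left, inner_add_right, real_inner_smul_left, real_inner_smul_right,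
    real_inner_self_eq_norm_sq]
  rw [real_inner_comm v u]; ring

lemma norm_combo' {E : Type*} [NormedAddCommGroup E] [InnerProductSpace ℝ E]
    (u v : E) (A B : ℝ) :
    ‖A•u + B•v‖^2 = A^2*‖u‖^2 + 2*(A*B*⟪u,v⟫) + B^2*‖v‖^2 := by
  rw [← real_inner_self_eq_norm_sq, inner_combo']; ring


/-- The minimum modulus `[T]` of a bounded linear map: the infimum of `‖T x‖`
over unit vectors `x`. -/
noncomputable def minMod {H K : Type*} [NormedAddCommGroup H] [InnerProductSpace ℝ H]
    [NormedAddCommGroup K] [InnerProductSpace ℝ K] (T : H →L[ℝ] K) : ℝ :=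
  ⨅ x : {x : H // ‖x‖ = 1}, ‖T x‖

/-- `T` is `(ε, c)`-angle preserving. -/
def AnglePres {H K : Type*} [NormedAddCommGroup H] [InnerProductSpace ℝ H]
    [NormedAddCommGroup K] [InnerProductSpace ℝ K] (c ε : ℝ) (T : H →L[ℝ] K) : Prop :=
  ∀ x y : H, ⟪x, y⟫ = c * ‖x‖ * ‖y‖ →
    |⟪T x, T y⟫ - c * ‖T x‖ * ‖T y‖| ≤ ε * ‖T x‖ * ‖T y‖

/-- `ε̂(T, c)`: the smallest `ε` for which `T` is `(ε, c)`-angle preserving. -/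
noncomputable def epsHat {H K : Type*} [NormedAddCommGroup H] [InnerProductSpace ℝ H]
    [NormedAddCommGroup K] [InnerProductSpace ℝ K] (c : ℝ) (T : H →L[ℝ] K) : ℝ :=
  sInf {ε : ℝ | ε ∈ Set.Icc 0 (1 + |c|) ∧ AnglePres c ε T}

theorem stmt_13 {H K : Type*} [NormedAddCommGroup H] [InnerProductSpace ℝ H] [CompleteSpace H]
    [NormedAddCommGroup K] [InnerProductSpace ℝ K] [CompleteSpace K]
    (hH : 2 ≤ Module.rank ℝ H)
    (c : ℝ) (hc : c ∈ Set.Ioo (-1 : ℝ) 1) (T : H →L[ℝ] K) (hT : T ≠ 0) :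
    (∃ ε : ℝ, ε ∈ Set.Ico 0 (1 + |c|) ∧ AnglePres c ε T) ↔ 0 < minMod T := by
  constructor
  · rintro ⟨ε, ⟨hε0, hεlt⟩, hAP⟩
    obtain ⟨hc1, hc2⟩ := hc
    have hcabs : |c| < 1 := abs_lt.mpr ⟨hc1, hc2⟩
    have hMpos : (0:ℝ) < ‖T‖ := norm_pos_iff.mpr hT
    have hex : ∃ x : H, T x ≠ 0 := by
      by_contra h; push_neg at h
      exact hT (by ext x; simp [h x])
    obtain ⟨x₀, hx₀⟩ := hex
    have hx₀ne : x₀ ≠ 0 := fun h => hx₀ (by simp [h])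
    haveI : Nonempty {x : H // ‖x‖ = 1} := ⟨⟨‖x₀‖⁻¹ • x₀, norm_smul_inv_norm hx₀ne⟩⟩
    by_contra hnot
    push_neg at hnot
    set M := ‖T‖ with hMdef
    set r := max (ε - |c|) 0 with hrdef
    have hr0 : 0 ≤ r := le_max_right _ _
    have hr1 : r < 1 := max_lt (by linarith) one_pos
    have hrε : ε - |c| ≤ r := le_max_left _ _
    set A := Real.sqrt ((1+|c|)/2) with hAdef
    set B := Real.sqrt ((1-|c|)/2) with hBdef
    have hA2 : A^2 = (1+|c|)/2 := Real.sq_sqrt (by positivity)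
    have hB2 : B^2 = (1-|c|)/2 := Real.sq_sqrt (by linarith)
    have hBpos : 0 < B := Real.sqrt_pos.mpr (by linarith)
    have hB2pos : 0 < B^2 := by positivity
    have hrA2 : 0 ≤ (1+r)*A^2 := mul_nonneg (by linarith) (sq_nonneg A)
    set X := (1-r)*B^2*(M/4)^2 / ((1+r)*A^2 + 1) with hXdef
    have hden : 0 < (1+r)*A^2 + 1 := by linarith
    have hXpos : 0 < X := by
      apply div_pos _ hden
      have h1r : 0 < (1-r) := by linarith
      positivity
    set δ := min (M/4) (Real.sqrt X) with hδdef
    have hδpos : 0 < δ := lt_min (by positivity) (Real.sqrt_pos.mpr hXpos)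
    have hδM : δ ≤ M/4 := min_le_left _ _
    have hδ2 : δ^2 ≤ X := by
      have h1 : δ ≤ Real.sqrt X := min_le_right _ _
      have h2 : δ^2 ≤ (Real.sqrt X)^2 := pow_le_pow_left₀ hδpos.le h1 2
      rwa [Real.sq_sqrt hXpos.le] at h2
    -- unit vector with small image
    have he : ∃ e : H, ‖e‖ = 1 ∧ ‖T e‖ < δ := by
      by_contra h; push_neg at h
      have hbdd : δ ≤ minMod T := le_ciInf (fun u => h u.1 u.2)
      linarith
    obtain ⟨e, he1, heδ⟩ := he
    -- unit vector with large image
    have hg : ∃ g : H, ‖g‖ = 1 ∧ M/2 < ‖T g‖ := by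
      have h1 : ∃ x : H, ¬ ‖T x‖ ≤ (M/2)*‖x‖ := by
        by_contra h; push_neg at h
        have := T.opNorm_le_bound (by positivity) (fun x => h x)
        rw [← hMdef] at this; linarith
      obtain ⟨x1, hx1⟩ := h1
      push_neg at hx1
      have hx1ne : x1 ≠ 0 := by
        rintro rfl
        rw [map_zero, norm_zero, norm_zero, mul_zero] at hx1
        exact lt_irrefl 0 hx1
      have hx1pos : 0 < ‖x1‖ := norm_pos_iff.mpr hx1ne
      refine ⟨‖x1‖⁻¹ • x1, norm_smul_inv_norm hx1ne, ?_⟩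
      rw [map_smul, norm_smul, Real.norm_eq_abs, abs_inv, abs_norm, inv_mul_eq_div,
        lt_div_iff₀ hx1pos]
      linarith
    obtain ⟨g, hg1, hgM⟩ := hg
    -- orthogonalize
    set f0 := g - ⟪g,e⟫ • e with hf0def
    have hge : |⟪g,e⟫| ≤ 1 := by
      have := abs_real_inner_le_norm g e
      rwa [hg1, he1, mul_one] at this
    have hTf0 : M/4 < ‖T f0‖ := by
      have h1 : T f0 = T g - ⟪g,e⟫ • T e := by rw [hf0def, map_sub, map_smul]
      have h2 := norm_sub_norm_le (T g) (⟪g,e⟫ • T e)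
      rw [← h1, norm_smul, Real.norm_eq_abs] at h2
      have h3 : |⟪g,e⟫| * ‖T e‖ ≤ 1 * δ :=
        mul_le_mul hge heδ.le (norm_nonneg _) one_pos.le
      linarith
    have hf0ne : f0 ≠ 0 := by
      intro h; rw [h, map_zero, norm_zero] at hTf0; linarith
    have hf0pos : 0 < ‖f0‖ := norm_pos_iff.mpr hf0ne
    have hf0le : ‖f0‖ ≤ 1 := by
      have h2 : ‖f0‖^2 ≤ 1 := by
        have he2 : ‖f0‖^2 = 1 - ⟪g,e⟫^2 := by
          rw [hf0def, norm_sub_sq_real, real_inner_smul_right, norm_smul, Real.norm_eq_abs,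
            mul_pow, sq_abs, hg1, he1]
          ring
        linarith [sq_nonneg (⟪g,e⟫)]
      linarith [sq_nonneg (‖f0‖ - 1), norm_nonneg f0]
    set f := ‖f0‖⁻¹ • f0 with hfdef
    have hf1 : ‖f‖ = 1 := norm_smul_inv_norm hf0ne
    have hef : ⟪e, f⟫ = 0 := by
      rw [hfdef, real_inner_smul_right, real_inner_comm]
      rw [hf0def]
      simp only [inner_sub_left, real_inner_smul_left, real_inner_self_eq_norm_sq, he1]
      ring
    have hTf : M/4 < ‖T f‖ := by
      have h1 : (1:ℝ) ≤ ‖f0‖⁻¹ := by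
        have hmc := mul_inv_cancel₀ hf0pos.ne'
        have hip := inv_pos.mpr hf0pos
        have hint : 0 ≤ (1 - ‖f0‖) * ‖f0‖⁻¹ :=
          mul_nonneg (by linarith) hip.le
        linarith [hint, hmc]
      have h2 : ‖T f‖ = ‖f0‖⁻¹ * ‖T f0‖ := by
        rw [hfdef, map_smul, norm_smul, Real.norm_eq_abs, abs_inv, abs_norm]
      have h3 : 0 ≤ (‖f0‖⁻¹ - 1) * ‖T f0‖ :=
        mul_nonneg (by linarith) (norm_nonneg _)
      linarith [h3, h2, hTf0]
    -- the test vectors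
    set x := A•e + B•f with hxdef
    set z := A•e + (-B)•f with hzdef
    have hTx : T x = A•(T e) + B•(T f) := by rw [hxdef, map_add, map_smul, map_smul]
    have hTz : T z = A•(T e) + (-B)•(T f) := by rw [hzdef, map_add, map_smul, map_smul]
    set P := B^2*‖T f‖^2 with hPdef
    set Q := A^2*‖T e‖^2 with hQdef
    set R := 2*(A*B*⟪T e, T f⟫) with hRdef
    have hxnorm : ‖x‖ = 1 := by
      have h1 : ‖x‖^2 = 1 := by
        rw [hxdef, norm_combo', he1, hf1, hef]; linear_combination hA2 + hB2
      rw [← Real.sqrt_sq (norm_nonneg x), h1, Real.sqrt_one]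
    have hznorm : ‖z‖ = 1 := by
      have h1 : ‖z‖^2 = 1 := by
        rw [hzdef, norm_combo', he1, hf1, hef]; linear_combination hA2 + hB2
      rw [← Real.sqrt_sq (norm_nonneg z), h1, Real.sqrt_one]
    have hxz : ⟪x, z⟫ = |c| := by
      rw [hxdef, hzdef, inner_combo', he1, hf1, hef]; linear_combination hA2 - hB2
    have hTxn : ‖T x‖^2 = Q + R + P := by
      rw [hTx, norm_combo', hQdef, hRdef, hPdef]
    have hTzn : ‖T z‖^2 = Q - R + P := by
      rw [hTz, norm_combo', hQdef, hRdef, hPdef]; ring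
    have hiTxz : ⟪T x, T z⟫ = Q - P := by
      rw [hTx, hTz, inner_combo', hQdef, hPdef]; ring
    set N := ‖T x‖ * ‖T z‖ with hNdef
    have hN0 : 0 ≤ N := by rw [hNdef]; positivity
    have hP0 : 0 ≤ P := by rw [hPdef]; positivity
    have hQ0 : 0 ≤ Q := by rw [hQdef]; positivity
    have hNle : N ≤ Q + P := by
      have h0 : N^2 = (Q+P)^2 - R^2 := by rw [hNdef, mul_pow, hTxn, hTzn]; ring
      have h1 : N^2 ≤ (Q+P)^2 := by linarith [sq_nonneg R]
      exact le_of_pow_le_pow_left₀ two_ne_zero (by linarith) h1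
    -- size estimates
    have hQble : Q ≤ A^2 * δ^2 := by
      have h1 : ‖T e‖^2 ≤ δ^2 := pow_le_pow_left₀ (norm_nonneg _) heδ.le 2
      rw [hQdef]
      exact mul_le_mul_of_nonneg_left h1 (sq_nonneg A)
    have hPge : B^2*(M/4)^2 ≤ P := by
      have h1 : (M/4)^2 ≤ ‖T f‖^2 := pow_le_pow_left₀ (by positivity) hTf.le 2
      rw [hPdef]
      exact mul_le_mul_of_nonneg_left h1 (sq_nonneg B)
    have hPQ : (1+r)*Q < (1-r)*P := by
      have hXeq : ((1+r)*A^2 + 1)*X = (1-r)*B^2*(M/4)^2 := by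
        rw [hXdef]; field_simp
      have h1 : (1+r)*Q ≤ (1+r)*(A^2*δ^2) :=
        mul_le_mul_of_nonneg_left hQble (by linarith)
      have h2 : ((1+r)*A^2)*δ^2 ≤ ((1+r)*A^2)*X :=
        mul_le_mul_of_nonneg_left hδ2 hrA2
      have h3 : ((1+r)*A^2)*X < (1-r)*B^2*(M/4)^2 := by
        rw [← hXeq]; linarith [hXpos]
      have h4 : (1-r)*(B^2*(M/4)^2) ≤ (1-r)*P :=
        mul_le_mul_of_nonneg_left hPge (by linarith)
      linarith [h1, h2, h3, h4]
    have hQltP : Q < P := by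
      have h1 : 0 ≤ r*(P+Q) := mul_nonneg hr0 (by linarith)
      linarith [hPQ, h1]
    -- apply angle preservation
    have hfinal : P - Q + |c| * N ≤ ε*N := by
      rcases le_or_gt 0 c with hc0 | hc0
      · have habs : |c| = c := abs_of_nonneg hc0
        have hin : ⟪x, z⟫ = c * ‖x‖ * ‖z‖ := by rw [hxz, hxnorm, hznorm, habs]; ring
        have hviol := hAP x z hin
        rw [hiTxz, show c*‖T x‖*‖T z‖ = c*N by rw [hNdef]; ring,
          show ε*‖T x‖*‖T z‖ = ε*N by rw [hNdef]; ring] at hviol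
        obtain ⟨hv1, hv2⟩ := abs_le.mp hviol
        rw [habs]; linarith
      · have habs : |c| = -c := abs_of_neg hc0
        have hin : ⟪x, -z⟫ = c * ‖x‖ * ‖-z‖ := by
          rw [inner_neg_right, hxz, hxnorm, norm_neg, hznorm, habs]; ring
        have hviol := hAP x (-z) hin
        rw [map_neg, inner_neg_right, hiTxz, norm_neg,
          show c*‖T x‖*‖T z‖ = c*N by rw [hNdef]; ring,
          show ε*‖T x‖*‖T z‖ = ε*N by rw [hNdef]; ring] at hviol
        obtain ⟨hv1, hv2⟩ := abs_le.mp hviol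
        rw [habs]; linarith
    -- contradiction
    have h1 : P - Q ≤ (ε - |c|)*N := by linarith [hfinal]
    have h2 : (ε - |c|)*N ≤ r*N := mul_le_mul_of_nonneg_right hrε hN0
    have h3 : r*N ≤ r*(Q+P) := mul_le_mul_of_nonneg_left hNle hr0
    linarith [h1, h2, h3, hPQ]
  · intro hm
    obtain ⟨hc1, hc2⟩ := hc
    have hMpos : (0:ℝ) < ‖T‖ := norm_pos_iff.mpr hT
    have hex : ∃ x : H, T x ≠ 0 := by
      by_contra h; push_neg at h
      exact hT (by ext x; simp [h x])
    obtain ⟨x₀, hx₀⟩ := hex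
    have hx₀ne : x₀ ≠ 0 := fun h => hx₀ (by simp [h])
    haveI : Nonempty {x : H // ‖x‖ = 1} := ⟨⟨‖x₀‖⁻¹ • x₀, norm_smul_inv_norm hx₀ne⟩⟩
    have hbdd : BddBelow (Set.range fun x : {x : H // ‖x‖ = 1} => ‖T x‖) :=
      ⟨0, by rintro _ ⟨x, rfl⟩; positivity⟩
    set m := minMod T with hmdef
    set M := ‖T‖ with hMdef
    have hmle : ∀ x : H, m * ‖x‖ ≤ ‖T x‖ := by
      intro x
      rcases eq_or_ne x 0 with rfl | hx
      · simp
      · have hxpos : 0 < ‖x‖ := norm_pos_iff.mpr hx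
        have h1 : m ≤ ‖T (‖x‖⁻¹ • x)‖ := ciInf_le hbdd ⟨_, norm_smul_inv_norm hx⟩
        rw [map_smul, norm_smul, Real.norm_eq_abs, abs_inv, abs_norm, inv_mul_eq_div,
          le_div_iff₀ hxpos] at h1
        exact h1
    have hmM : m ≤ M := by
      obtain ⟨u⟩ := ‹Nonempty {x : H // ‖x‖ = 1}›
      have h1 : m ≤ ‖T u‖ := ciInf_le hbdd u
      have h2 : ‖T u.1‖ ≤ M * ‖u.1‖ := T.le_opNorm u
      rw [u.2, mul_one] at h2
      linarith
    have hm2M2 : m^2 ≤ M^2 := by nlinarith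
    have hM2 : (0:ℝ) < M^2 := by positivity
    refine ⟨(1+|c|) * (M^2 - m^2) / M^2, ⟨?_, ?_⟩, ?_⟩
    · have : (0:ℝ) ≤ 1 + |c| := by positivity
      exact div_nonneg (mul_nonneg this (by linarith)) (by positivity)
    · rw [div_lt_iff₀ hM2]
      nlinarith [abs_nonneg c, mul_pos (show (0:ℝ) < 1 + |c| by positivity)
        (show (0:ℝ) < m^2 by positivity)]
    · intro x y hxy
      by_cases hx : x = 0
      · simp [hx]
      by_cases hy : y = 0
      · simp [hy]
      set p := ‖T x‖ with hpdef
      set q := ‖T y‖ with hqdef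
      set a := ⟪T x, T y⟫ with hadef
      set nx := ‖x‖ with hnxdef
      set ny := ‖y‖ with hnydef
      have hnx : 0 < nx := norm_pos_iff.mpr hx
      have hny : 0 < ny := norm_pos_iff.mpr hy
      have hp : m * nx ≤ p := hmle x
      have hq : m * ny ≤ q := hmle y
      have hppos : 0 < p := lt_of_lt_of_le (by positivity) hp
      have hqpos : 0 < q := lt_of_lt_of_le (by positivity) hq
      have hpM : p ≤ M * nx := T.le_opNorm x
      have hqM : q ≤ M * ny := T.le_opNorm y
      have key : ∀ s : ℝ, m^2 * ‖q•x + s•y‖^2 ≤ ‖q•(T x) + s•(T y)‖^2 := by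
        intro s
        have h0 := hmle (q•x + s•y)
        have h1 : T (q•x + s•y) = q•(T x) + s•(T y) := by
          rw [map_add, map_smul, map_smul]
        have h2 := pow_le_pow_left₀ (by positivity) h0 2
        rw [h1, mul_pow] at h2
        exact h2
      have EU : m^2*(q^2*nx^2 + 2*(q*(-p)*(c*nx*ny)) + p^2*ny^2)
          ≤ q^2*p^2 + 2*(q*(-p)*a) + (-p)^2*q^2 := by
        have h2 := key (-p)
        rw [norm_combo' x y q (-p), norm_combo' (T x) (T y) q (-p), hxy,
          ← hnxdef, ← hnydef, ← hpdef, ← hqdef, ← hadef] at h2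
        linarith [h2]
      have EL : m^2*(q^2*nx^2 + 2*(q*p*(c*nx*ny)) + p^2*ny^2)
          ≤ q^2*p^2 + 2*(q*p*a) + p^2*q^2 := by
        have h2 := key p
        rw [norm_combo' x y q p, norm_combo' (T x) (T y) q p, hxy,
          ← hnxdef, ← hnydef, ← hpdef, ← hqdef, ← hadef] at h2
        linarith [h2]
      have hUp : a ≤ p*q - m^2*(nx*ny)*(1-c) := by
        nlinarith [EU, mul_nonneg (sq_nonneg m) (sq_nonneg (q*nx - p*ny)), mul_pos hppos hqpos]
      have hLo : -(p*q) + m^2*(nx*ny)*(1+c) ≤ a := by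
        nlinarith [EL, mul_nonneg (sq_nonneg m) (sq_nonneg (q*nx - p*ny)), mul_pos hppos hqpos]
      have hpq1 : p*q ≤ M^2*(nx*ny) := by
        nlinarith [mul_le_mul hpM hqM hqpos.le (by positivity : (0:ℝ) ≤ M*nx)]
      have hpqpos : 0 < p*q := mul_pos hppos hqpos
      have hA : m^2*(p*q) ≤ m^2*(M^2*(nx*ny)) :=
        mul_le_mul_of_nonneg_left hpq1 (by positivity)
      have hCc1 : -c ≤ |c| := by cases abs_cases c <;> linarith
      have hCc2 : c ≤ |c| := le_abs_self c
      rw [show (1+|c|) * (M^2 - m^2) / M^2 * p * q = (1+|c|) * (M^2 - m^2) * (p*q) / M^2 by ring,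
        abs_le]
      constructor
      · rw [neg_le, le_div_iff₀ hM2]
        have hK1 := mul_le_mul_of_nonneg_right hLo hM2.le
        have hK2 : 0 ≤ (1+c) * (m^2*(M^2*(nx*ny)) - m^2*(p*q)) :=
          mul_nonneg (by linarith) (by linarith)
        have hK3 : 0 ≤ (|c| - c) * ((M^2 - m^2)*(p*q)) :=
          mul_nonneg (by linarith) (mul_nonneg (by linarith) hpqpos.le)
        nlinarith [hK1, hK2, hK3]
      · rw [le_div_iff₀ hM2]
        have hK1 := mul_le_mul_of_nonneg_right hUp hM2.le
        have hK2 : 0 ≤ (1-c) * (m^2*(M^2*(nx*ny)) - m^2*(p*q)) :=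
          mul_nonneg (by linarith) (by linarith)
        have hK3 : 0 ≤ (|c| + c) * ((M^2 - m^2)*(p*q)) :=
          mul_nonneg (by linarith) (mul_nonneg (by linarith) hpqpos.le)
        nlinarith [hK1, hK2, hK3]
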